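/- Let f ∈ ℝ[x] and v > 0 a real number, let J be an ideal with (f/v − 1)^η ∈ J for some integer η > 0. Define s = √v · ∑_{j=0}^{η−1} C(1/2, j)(f/v − 1)^j and σ = s². Then σ is a sum of squares and f − σ ∈ J. -/

import Mathlib

open Polynomial in
lemma choose_half_eq (n : ℕ) :
    Ring.choose ((1:ℝ)/2) n
      = (∏ i ∈ Finset.range n, ((1:ℝ)/2 - i)) / (Nat.factorial n) := by
  have h1 : (descPochhammer ℤ n).smeval ((1:ℝ)/2)
      = ∏ i ∈ Finset.range n, ((1:ℝ)/2 - i) := by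
    induction n with
    | zero => simp [descPochhammer_zero, Polynomial.smeval_one]
    | succ k ih =>
      rw [descPochhammer_succ_right, Polynomial.smeval_mul, ih, Finset.prod_range_succ]
      congr 1
      rw [Polynomial.smeval_sub, Polynomial.smeval_X, Polynomial.smeval_natCast]
      simp
  have h2 := Ring.descPochhammer_eq_factorial_smul_choose ((1:ℝ)/2) n
  rw [h1, nsmul_eq_mul] at h2
  have hfac : (Nat.factorial n : ℝ) ≠ 0 := by
    exact_mod_cast Nat.factorial_ne_zero n
  rw [eq_div_iff hfac, mul_comm]
  exact h2.symm

open Polynomial in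
lemma key_dvd (η : ℕ) (c : ℕ → ℝ)
    (hc : ∀ j, c j = (∏ i ∈ Finset.range j, ((1:ℝ)/2 - i)) / (Nat.factorial j)) :
    (X : ℝ[X]) ^ η ∣ (∑ j ∈ Finset.range η, C (c j) * X ^ j) ^ 2 - (1 + X) := by
  rw [X_pow_dvd_iff]
  intro d hd
  have hcoeff : ∀ k, (∑ j ∈ Finset.range η, C (c j) * X ^ j).coeff k
      = if k < η then c k else 0 := by
    intro k
    rw [finset_sum_coeff]
    simp only [coeff_C_mul, coeff_X_pow, mul_ite, mul_one, mul_zero]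
    rw [Finset.sum_ite_eq (Finset.range η) k c]
    simp [Finset.mem_range]
  have hchoose : ∀ j, c j = Ring.choose ((1:ℝ)/2) j := by
    intro j; rw [hc j, choose_half_eq]
  rw [sq, coeff_sub, coeff_mul, coeff_add, coeff_one, coeff_X, sub_eq_zero]
  have hsum : ∑ x ∈ Finset.HasAntidiagonal.antidiagonal d,
      (∑ j ∈ Finset.range η, C (c j) * X ^ j).coeff x.1 *
      (∑ j ∈ Finset.range η, C (c j) * X ^ j).coeff x.2
      = ∑ x ∈ Finset.HasAntidiagonal.antidiagonal d,
        Ring.choose ((1:ℝ)/2) x.1 * Ring.choose ((1:ℝ)/2) x.2 := by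
    apply Finset.sum_congr rfl
    intro x hx
    rw [Finset.HasAntidiagonal.mem_antidiagonal] at hx
    rw [hcoeff, hcoeff, if_pos (by omega), if_pos (by omega), hchoose, hchoose]
  rw [hsum, ← Ring.add_choose_eq d (Commute.all _ _)]
  have : (1:ℝ)/2 + 1/2 = ((1:ℕ) : ℝ) := by norm_num
  rw [this, Ring.choose_natCast]
  rcases d with _ | _ | d <;> simp [Nat.choose]

/-- If `(f/v − 1)^η ∈ J` with `v > 0`, then
`σ = (√v ∑_{j<η} C(1/2,j)(f/v−1)^j)²` is SOS and `f − σ ∈ J`. -/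
theorem stmt13 (n : ℕ) (f : MvPolynomial (Fin n) ℝ)
    (J : Ideal (MvPolynomial (Fin n) ℝ))
    (v : ℝ) (hv : 0 < v)
    (η : ℕ) (hη : 0 < η)
    (hf : (MvPolynomial.C v⁻¹ * f - 1) ^ η ∈ J)
    (c : ℕ → ℝ)
    (hc : ∀ j, c j = (∏ i ∈ Finset.range j, ((1:ℝ)/2 - i)) / (Nat.factorial j))
    (s : MvPolynomial (Fin n) ℝ)
    (hs : s = MvPolynomial.C (Real.sqrt v) *
          ∑ j ∈ Finset.range η, MvPolynomial.C (c j) * (MvPolynomial.C v⁻¹ * f - 1) ^ j) :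
    IsSumSq (s ^ 2) ∧ f - s ^ 2 ∈ J := by
  constructor
  · rw [sq, ← add_zero (s * s)]
    exact IsSumSq.sq_add s IsSumSq.zero
  · set g : MvPolynomial (Fin n) ℝ := MvPolynomial.C v⁻¹ * f - 1 with hg
    set p : MvPolynomial (Fin n) ℝ :=
      ∑ j ∈ Finset.range η, MvPolynomial.C (c j) * g ^ j with hp
    have hsq : s ^ 2 = MvPolynomial.C v * p ^ 2 := by
      rw [hs, mul_pow, ← map_pow, sq, Real.mul_self_sqrt hv.le]
    have hfeq : f = MvPolynomial.C v * (1 + g) := by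
      rw [hg]
      rw [mul_add, mul_one, mul_sub, ← mul_assoc, ← map_mul,
        mul_inv_cancel₀ hv.ne', map_one, one_mul]
      ring
    have hdvd : g ^ η ∣ p ^ 2 - (1 + g) := by
      obtain ⟨q, hq⟩ := key_dvd η c hc
      have := congrArg (Polynomial.aeval g) hq
      simp only [map_sub, map_pow, map_add, map_mul, map_one, Polynomial.aeval_X,
        map_sum, Polynomial.aeval_C] at this
      exact ⟨Polynomial.aeval g q, by rw [hp]; simpa [MvPolynomial.algebraMap_eq] using this⟩
    have : f - s ^ 2 = MvPolynomial.C v * ((1 + g) - p ^ 2) := by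
      rw [hsq, hfeq]; ring
    rw [this]
    obtain ⟨q, hq⟩ := hdvd
    have h2 : (1 + g) - p ^ 2 = g ^ η * (-q) := by
      have := hq
      linear_combination -this
    rw [h2]
    exact Ideal.mul_mem_left _ _ (Ideal.mul_mem_right _ _ hf)
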